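/- arXiv:math/0010079 — 2 statements merged into one kernel-verified Lean document; each statement's English description precedes it below -/
import Mathlib

section
/- Let (U, U') be a finite-dimensional AH-module, i.e., U is a left ℍ-module, U' ⊆ U is a real subspace, U^† = {α ∈ U^× : α(u) ∈ 𝕀 for all u ∈ U'}, and for every u ∈ U, if α(u) = 0 for all α ∈ U^† then u = 0. Then dim_ℝ U' + dim_ℝ U^† = dim_ℝ U. -/
open Module

local notation "ℍ" => Quaternion ℝ

noncomputable section

/-- The imaginary quaternions, as a real subspace of `ℍ`. -/
def ImH : Submodule ℝ ℍ where
  carrier := {x | x.re = 0}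
  add_mem' := by
    intro a b ha hb
    simp only [Set.mem_setOf_eq] at *
    simp [ha, hb]
  zero_mem' := by simp; rfl
  smul_mem' := by
    intro c x hx
    simp only [Set.mem_setOf_eq] at *
    simp [hx]

variable {U : Type*} [AddCommGroup U] [Module ℝ U] [Module ℍ U]
variable {V : Type*} [AddCommGroup V] [Module ℝ V] [Module ℍ V]
variable {W : Type*} [AddCommGroup W] [Module ℝ W] [Module ℍ W]
variable {X : Type*} [AddCommGroup X] [Module ℝ X] [Module ℍ X]

/-- `U^†`: the real subspace of those real-linear maps `U → ℍ` that are `ℍ`-linear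
and map the distinguished subspace `U'` into the imaginary quaternions. -/
def AHDual (U' : Submodule ℝ U) : Submodule ℝ (U →ₗ[ℝ] ℍ) where
  carrier := {α | (∀ (c : ℍ) (u : U), α (c • u) = c * α u) ∧ ∀ u ∈ U', (α u).re = 0}
  zero_mem' := ⟨fun c u => by simp, fun u hu => by simp; rfl⟩
  add_mem' := by
    rintro a b ⟨ha1, ha2⟩ ⟨hb1, hb2⟩
    exact ⟨fun c u => by simp [ha1 c u, hb1 c u, mul_add],
           fun u hu => by simp [ha2 u hu, hb2 u hu]⟩
  smul_mem' := by
    rintro r α ⟨h1, h2⟩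
    refine ⟨fun c u => ?_, fun u hu => ?_⟩
    · simp [h1 c u, mul_smul_comm]
    · simp [h2 u hu]

/-- The AH-module condition: `U^†` separates points of `U`. -/
def IsAH (U' : Submodule ℝ U) : Prop :=
  ∀ u : U, (∀ α : U →ₗ[ℝ] ℍ, α ∈ AHDual U' → α u = 0) → u = 0

attribute [local simp] Quaternion.re_zero Quaternion.imI_zero Quaternion.imJ_zero Quaternion.imK_zero Quaternion.re_one Quaternion.imI_one Quaternion.imJ_one Quaternion.imK_one

section AuxAH
variable [IsScalarTower ℝ ℍ U]

def qi : ℍ := ⟨0,1,0,0⟩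
def qj : ℍ := ⟨0,0,1,0⟩
def qk : ℍ := ⟨0,0,0,1⟩

lemma qii : qi * qi = -1 := by ext <;> simp <;> simp [qi]
lemma qji : qj * qi = -qk := by ext <;> simp <;> simp [qi, qj, qk]
lemma qki : qk * qi = qj := by ext <;> simp <;> simp [qi, qj, qk]
lemma qij : qi * qj = qk := by ext <;> simp <;> simp [qi, qj, qk]
lemma qjj : qj * qj = -1 := by ext <;> simp <;> simp [qj]
lemma qkj : qk * qj = -qi := by ext <;> simp <;> simp [qi, qj, qk]
lemma qik : qi * qk = -qj := by ext <;> simp <;> simp [qi, qj, qk]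
lemma qjk : qj * qk = qi := by ext <;> simp <;> simp [qi, qj, qk]
lemma qkk : qk * qk = -1 := by ext <;> simp <;> simp [qk]

lemma quat_real_smul_comm (q : ℍ) (r : ℝ) (u : U) : q • (r • u) = r • (q • u) := by
  rw [← algebraMap_smul ℍ r u, smul_smul, ← Algebra.commutes r q, mul_smul, algebraMap_smul]

def quatExt (f : U →ₗ[ℝ] ℝ) : U →ₗ[ℝ] ℍ where
  toFun u := ⟨f u, -f (qi • u), -f (qj • u), -f (qk • u)⟩
  map_add' u v := by ext <;> simp [smul_add] <;> (show _ = _ + _; ring)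
  map_smul' r u := by ext <;> simp [quat_real_smul_comm _ r] <;> (show _ = _ * _; ring)

lemma quatExt_apply (f : U →ₗ[ℝ] ℝ) (u : U) :
    quatExt f u = ⟨f u, -f (qi • u), -f (qj • u), -f (qk • u)⟩ := rfl

lemma smul_decomp (c : ℍ) (u : U) :
    c • u = c.re • u + c.imI • (qi • u) + c.imJ • (qj • u) + c.imK • (qk • u) := by
  have hc : c = c.re • (1:ℍ) + c.imI • qi + c.imJ • qj + c.imK • qk := by
    ext <;> simp <;> simp [qi, qj, qk]
  calc c • u = (c.re • (1:ℍ) + c.imI • qi + c.imJ • qj + c.imK • qk) • u := by rw [← hc]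
  _ = _ := by simp only [add_smul, smul_assoc, one_smul]

lemma qi_mul (x : ℍ) : qi * x = ⟨-x.imI, x.re, -x.imK, x.imJ⟩ := by ext <;> simp <;> simp [qi]
lemma qj_mul (x : ℍ) : qj * x = ⟨-x.imJ, x.imK, x.re, -x.imI⟩ := by ext <;> simp <;> simp [qj]
lemma qk_mul (x : ℍ) : qk * x = ⟨-x.imK, -x.imJ, x.imI, x.re⟩ := by ext <;> simp <;> simp [qk]

lemma quatExt_hsmul (f : U →ₗ[ℝ] ℝ) (c : ℍ) (u : U) :
    quatExt f (c • u) = c * quatExt f u := by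
  have hi : ∀ v : U, quatExt f (qi • v) = qi * quatExt f v := by
    intro v
    rw [qi_mul, quatExt_apply, quatExt_apply]
    ext <;> simp [smul_smul, qii, qji, qki, neg_smul]
  have hj : ∀ v : U, quatExt f (qj • v) = qj * quatExt f v := by
    intro v
    rw [qj_mul, quatExt_apply, quatExt_apply]
    ext <;> simp [smul_smul, qij, qjj, qkj, neg_smul]
  have hk : ∀ v : U, quatExt f (qk • v) = qk * quatExt f v := by
    intro v
    rw [qk_mul, quatExt_apply, quatExt_apply]
    ext <;> simp [smul_smul, qik, qjk, qkk, neg_smul]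
  have hc : c = c.re • (1:ℍ) + c.imI • qi + c.imJ • qj + c.imK • qk := by
    ext <;> simp <;> simp [qi, qj, qk]
  rw [smul_decomp c u]
  simp only [map_add, LinearMap.map_smul, hi, hj, hk]
  conv_rhs => rw [hc]
  simp only [add_mul, smul_mul_assoc, one_mul]

end AuxAH

section AuxAH2
variable [IsScalarTower ℝ ℍ U]

def reL : ℍ →ₗ[ℝ] ℝ where
  toFun q := q.re
  map_add' _ _ := rfl
  map_smul' _ _ := rfl

@[simp] lemma reL_apply (q : ℍ) : reL q = q.re := rfl

lemma quatExt_reL (α : U →ₗ[ℝ] ℍ) (h : ∀ (c : ℍ) (u : U), α (c • u) = c * α u) :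
    quatExt (reL ∘ₗ α) = α := by
  refine LinearMap.ext fun u => ?_
  rw [quatExt_apply]
  ext <;> simp [h, qi_mul, qj_mul, qk_mul, QuaternionAlgebra.reₗ_apply] <;> exact neg_neg _

def ahDualEquiv (U' : Submodule ℝ U) :
    AHDual U' ≃ₗ[ℝ] (Submodule.dualAnnihilator U' : Submodule ℝ (Module.Dual ℝ U)) where
  toFun α := ⟨reL ∘ₗ (α : U →ₗ[ℝ] ℍ), by
    rw [Submodule.mem_dualAnnihilator]
    intro w hw
    exact α.2.2 w hw⟩
  map_add' α β := by ext; simp [reL]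
  map_smul' r α := by ext; simp [reL]
  invFun f := ⟨quatExt (f : U →ₗ[ℝ] ℝ), quatExt_hsmul _, fun u hu => by
    have := (Submodule.mem_dualAnnihilator _).mp f.2 u hu
    simp [quatExt_apply, this]⟩
  left_inv α := by
    ext1
    exact quatExt_reL _ α.2.1
  right_inv f := by
    ext u
    simp [quatExt_apply]; rfl


end AuxAH2

/-- For a finite-dimensional AH-module `(U, U')`,
`dim_ℝ U' + dim_ℝ U^† = dim_ℝ U`. -/
theorem ahModule_dim_prime_add_dim_dagger
    (U' : Submodule ℝ U) [IsScalarTower ℝ ℍ U] [FiniteDimensional ℝ U]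
    (hAH : IsAH U') :
    finrank ℝ ↥U' + finrank ℝ ↥(AHDual U') = finrank ℝ U := by
  have h1 : finrank ℝ ↥(AHDual U') = finrank ℝ ↥(Submodule.dualAnnihilator U') :=
    (ahDualEquiv U').finrank_eq
  have h2 : finrank ℝ (U ⧸ U') = finrank ℝ ↥(Submodule.dualAnnihilator U') :=
    (Subspace.quotEquivAnnihilator U').finrank_eq
  rw [h1, ← h2, add_comm, Submodule.finrank_quotient_add_finrank]

end
end

section
/- Let (U,U') and (V,V') be AH-modules, and let u ∈ U, v ∈ V be nonzero elements such that α(u)·β(v) = β(v)·α(u) in ℍ for every α ∈ U^† and β ∈ V^†. Define an element u ⊗_ℍ v of ℍ ⊗ (U^†)^* ⊗ (V^†)^* by (u ⊗_ℍ v)(α ⊗ β) = α(u)·β(v). Then u ⊗_ℍ v is a nonzero element of the quaternionic tensor product U ⊗_ℍ V. -/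
open Module

local notation "ℍ" => Quaternion ℝ

noncomputable section

variable {U : Type*} [AddCommGroup U] [Module ℝ U] [Module ℍ U]
variable {V : Type*} [AddCommGroup V] [Module ℝ V] [Module ℍ V]
variable {W : Type*} [AddCommGroup W] [Module ℝ W] [Module ℍ W]
variable {X : Type*} [AddCommGroup X] [Module ℝ X] [Module ℍ X]

/-- The map `ι_U : U → ((U^†) →ₗ ℍ)`, `ι_U(u)(α) = α(u)`. -/
def iotaAH (U' : Submodule ℝ U) : U →ₗ[ℝ] (↥(AHDual U') →ₗ[ℝ] ℍ) where
  toFun u :=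
    { toFun := fun α => (α : U →ₗ[ℝ] ℍ) u
      map_add' := fun a b => rfl
      map_smul' := fun r a => rfl }
  map_add' := fun u v => LinearMap.ext fun α => by simp
  map_smul' := fun r u => LinearMap.ext fun α => by simp

@[simp] theorem iotaAH_apply (U' : Submodule ℝ U) (u : U) (α : ↥(AHDual U')) :
    iotaAH U' u α = (α : U →ₗ[ℝ] ℍ) u := rfl

/-- The quaternionic tensor product `U ⊗_ℍ V`, realised as the subspace of real-bilinear
maps `U^† × V^† → ℍ` all of whose slices lie in `ι_U(U)` resp. `ι_V(V)`. -/
def QTP (U' : Submodule ℝ U) (V' : Submodule ℝ V) :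
    Submodule ℝ (↥(AHDual U') →ₗ[ℝ] ↥(AHDual V') →ₗ[ℝ] ℍ) where
  carrier := {B | (∀ β, ∃ u : U, ∀ α, B α β = iotaAH U' u α) ∧
                  (∀ α, ∃ v : V, ∀ β, B α β = iotaAH V' v β)}
  zero_mem' :=
    ⟨fun β => ⟨0, fun α => by simp⟩, fun α => ⟨0, fun β => by simp⟩⟩
  add_mem' := by
    rintro B C ⟨hB1, hB2⟩ ⟨hC1, hC2⟩
    refine ⟨fun β => ?_, fun α => ?_⟩
    · obtain ⟨u, hu⟩ := hB1 β; obtain ⟨u', hu'⟩ := hC1 β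
      exact ⟨u + u', fun α => by simp [hu α, hu' α]⟩
    · obtain ⟨v, hv⟩ := hB2 α; obtain ⟨v', hv'⟩ := hC2 α
      exact ⟨v + v', fun β => by simp [hv β, hv' β]⟩
  smul_mem' := by
    rintro r B ⟨h1, h2⟩
    refine ⟨fun β => ?_, fun α => ?_⟩
    · obtain ⟨u, hu⟩ := h1 β; exact ⟨r • u, fun α => by simp [hu α]⟩
    · obtain ⟨v, hv⟩ := h2 α; exact ⟨r • v, fun β => by simp [hv β]⟩

/-- The left action of a quaternion `c` on the ambient space of `U ⊗_ℍ V`. -/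
def hsmulBil (U' : Submodule ℝ U) (V' : Submodule ℝ V) (c : ℍ) :
    (↥(AHDual U') →ₗ[ℝ] ↥(AHDual V') →ₗ[ℝ] ℍ) →ₗ[ℝ]
      (↥(AHDual U') →ₗ[ℝ] ↥(AHDual V') →ₗ[ℝ] ℍ) where
  toFun B :=
    { toFun := fun α =>
        { toFun := fun β => c * B α β
          map_add' := fun b b' => by simp [mul_add]
          map_smul' := fun r b => by simp [mul_smul_comm] }
      map_add' := fun a a' => LinearMap.ext fun β => by simp [mul_add]
      map_smul' := fun r a => LinearMap.ext fun β => by simp [mul_smul_comm] }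
  map_add' := fun B B' => LinearMap.ext fun α => LinearMap.ext fun β => by simp [mul_add]
  map_smul' := fun r B => LinearMap.ext fun α => LinearMap.ext fun β => by simp [mul_smul_comm]

@[simp] theorem hsmulBil_apply (U' : Submodule ℝ U) (V' : Submodule ℝ V) (c : ℍ)
    (B : ↥(AHDual U') →ₗ[ℝ] ↥(AHDual V') →ₗ[ℝ] ℍ) (α : ↥(AHDual U')) (β : ↥(AHDual V')) :
    hsmulBil U' V' c B α β = c * B α β := rfl

theorem hsmulBil_mem {U' : Submodule ℝ U} {V' : Submodule ℝ V} (c : ℍ)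
    {B : ↥(AHDual U') →ₗ[ℝ] ↥(AHDual V') →ₗ[ℝ] ℍ} (hB : B ∈ QTP U' V') :
    hsmulBil U' V' c B ∈ QTP U' V' := by
  obtain ⟨h1, h2⟩ := hB
  constructor
  · intro β
    obtain ⟨u, hu⟩ := h1 β
    refine ⟨c • u, fun α => ?_⟩
    have hα : (α : U →ₗ[ℝ] ℍ) (c • u) = c * (α : U →ₗ[ℝ] ℍ) u := α.2.1 c u
    rw [hsmulBil_apply, hu α, iotaAH_apply, iotaAH_apply, hα]
  · intro α
    obtain ⟨v, hv⟩ := h2 α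
    refine ⟨c • v, fun β => ?_⟩
    have hβ : (β : V →ₗ[ℝ] ℍ) (c • v) = c * (β : V →ₗ[ℝ] ℍ) v := β.2.1 c v
    rw [hsmulBil_apply, hv β, iotaAH_apply, iotaAH_apply, hβ]

/-- The primed part of `U ⊗_ℍ V` (the intersection with `𝕀 ⊗ (U^†)^* ⊗ (V^†)^*`). -/
def QTPprimeSet (U' : Submodule ℝ U) (V' : Submodule ℝ V) : Set ↥(QTP U' V') :=
  {x | ∀ (α : ↥(AHDual U')) (β : ↥(AHDual V')),
    (((x : ↥(AHDual U') →ₗ[ℝ] ↥(AHDual V') →ₗ[ℝ] ℍ)) α β).re = 0}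

/-- `X_q'`: the real subspace of quaternions anticommuting with `q`. -/
def XqP (q : ℍ) : Submodule ℝ ℍ where
  carrier := {p | p * q = -(q * p)}
  zero_mem' := by simp
  add_mem' := by
    intro a b ha hb
    simp only [Set.mem_setOf_eq] at *
    rw [add_mul, mul_add, ha, hb, neg_add]
  smul_mem' := by
    intro r p hp
    simp only [Set.mem_setOf_eq] at *
    rw [smul_mul_assoc, hp, mul_smul_comm, smul_neg]

theorem XqP_le_im {q : ℍ} (hq : q.re = 0) (hq0 : q ≠ 0) :
    ∀ p ∈ XqP q, p.re = 0 := by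
  intro p hp
  have h : p * q + q * p = 0 := by
    have h' : p * q = -(q * p) := hp
    rw [h', neg_add_cancel]
  have e1 : p.re * q.imI = 0 := by
    have := congrArg QuaternionAlgebra.imI h
    simp only [Quaternion.imI_add, Quaternion.imI_mul, Quaternion.imI_zero, hq] at this
    linarith
  have e2 : p.re * q.imJ = 0 := by
    have := congrArg QuaternionAlgebra.imJ h
    simp only [Quaternion.imJ_add, Quaternion.imJ_mul, Quaternion.imJ_zero, hq] at this
    linarith
  have e3 : p.re * q.imK = 0 := by
    have := congrArg QuaternionAlgebra.imK h
    simp only [Quaternion.imK_add, Quaternion.imK_mul, Quaternion.imK_zero, hq] at this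
    linarith
  by_contra hpre
  apply hq0
  ext
  · exact hq
  · exact (mul_eq_zero.mp e1).resolve_left hpre
  · exact (mul_eq_zero.mp e2).resolve_left hpre
  · exact (mul_eq_zero.mp e3).resolve_left hpre

open Classical in
/-- The identity map `ℍ → ℍ`, as an element of `(X_q)^†` (junk value if `q` is not
a nonzero imaginary quaternion). -/
def idXqDual (q : ℍ) : ↥(AHDual (XqP q)) :=
  if h : q.re = 0 ∧ q ≠ 0 then
    ⟨(LinearMap.id : ℍ →ₗ[ℝ] ℍ),
      ⟨fun c u => by simp [smul_eq_mul], fun u hu => XqP_le_im h.1 h.2 u hu⟩⟩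
  else 0

/-- The image of `id ⊗_ℍ χ_q : U ⊗_ℍ X_q → U` inside `U`. -/
def chiImage (U' : Submodule ℝ U) (q : ℍ) : Set U :=
  {u | ∃ B ∈ QTP U' (XqP q), ∀ α : ↥(AHDual U'), B α (idXqDual q) = iotaAH U' u α}

/-- A (finite-dimensional) AH-module is semistable if it is generated as an `ℍ`-module by
the images of the maps `id ⊗_ℍ χ_q` over all nonzero imaginary `q`. -/
def Semistable (U' : Submodule ℝ U) : Prop :=
  Submodule.span ℍ (⋃ q ∈ {q : ℍ | q.re = 0 ∧ q ≠ 0}, chiImage U' q) = ⊤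

/-- `U ⊗_ℍ X_q` is AH-isomorphic to the direct sum of `n` copies of `X_q`. -/
def AHIsoNXq (U' : Submodule ℝ U) (q : ℍ) (n : ℕ) : Prop :=
  ∃ e : ↥(QTP U' (XqP q)) ≃ₗ[ℝ] (Fin n → ℍ),
    (∀ (c : ℍ) (x : ↥(QTP U' (XqP q))),
      e ⟨hsmulBil U' (XqP q) c ↑x, hsmulBil_mem c x.2⟩ = c • e x) ∧
    ((fun x => e x) '' QTPprimeSet U' (XqP q) = {f : Fin n → ℍ | ∀ i, f i ∈ XqP q})

/-- A stable AH-module with virtual dimension `r`. -/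
def Stable (U' : Submodule ℝ U) (r : ℕ) : Prop :=
  Semistable U' ∧ ∀ q : ℍ, q.re = 0 → q ≠ 0 → AHIsoNXq U' q r

/-- A stable AH-module (existentially quantified virtual dimension). -/
def IsStable (U' : Submodule ℝ U) : Prop :=
  Semistable U' ∧ ∃ j r : ℕ, finrank ℝ U = 4 * j ∧ finrank ℝ ↥U' = 2 * j + r ∧
    ∀ q : ℍ, q.re = 0 → q ≠ 0 → AHIsoNXq U' q r

/-- The dual `φ^× : V^† → U^†` of an AH-morphism `φ : U → V`. -/
def dualPull (U' : Submodule ℝ U) (V' : Submodule ℝ V) (φ : U →ₗ[ℝ] V)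
    (hφH : ∀ (c : ℍ) (u : U), φ (c • u) = c • φ u) (hφ' : ∀ u ∈ U', φ u ∈ V') :
    ↥(AHDual V') →ₗ[ℝ] ↥(AHDual U') where
  toFun γ := ⟨(γ : V →ₗ[ℝ] ℍ).comp φ,
    ⟨fun c u => by simp [hφH c u, γ.2.1], fun u hu => γ.2.2 _ (hφ' u hu)⟩⟩
  map_add' := fun a b => Subtype.ext (LinearMap.ext fun u => by simp)
  map_smul' := fun r a => Subtype.ext (LinearMap.ext fun u => by simp)


/-- The element `u ⊗_ℍ v` of `ℍ ⊗ (U^†)^* ⊗ (V^†)^*`, `(u ⊗_ℍ v)(α ⊗ β) = α(u)·β(v)`. -/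
def tensorElt (U' : Submodule ℝ U) (V' : Submodule ℝ V) (u : U) (v : V) :
    ↥(AHDual U') →ₗ[ℝ] ↥(AHDual V') →ₗ[ℝ] ℍ where
  toFun α :=
    { toFun := fun β => (α : U →ₗ[ℝ] ℍ) u * (β : V →ₗ[ℝ] ℍ) v
      map_add' := fun a b => by simp [mul_add]
      map_smul' := fun r a => by simp [mul_smul_comm] }
  map_add' := fun a b => LinearMap.ext fun β => by simp [add_mul]
  map_smul' := fun r a => LinearMap.ext fun β => by simp [smul_mul_assoc]

/-- If `u ∈ U`, `v ∈ V` are nonzero and `α(u)` commutes with `β(v)` for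
all `α ∈ U^†`, `β ∈ V^†`, then `u ⊗_ℍ v` is a nonzero element of `U ⊗_ℍ V`. -/
theorem tensorElt_mem_and_ne_zero
    (U' : Submodule ℝ U) (V' : Submodule ℝ V) (hU : IsAH U') (hV : IsAH V')
    (u : U) (v : V) (hu : u ≠ 0) (hv : v ≠ 0)
    (hcomm : ∀ α ∈ AHDual U', ∀ β ∈ AHDual V', α u * β v = β v * α u) :
    tensorElt U' V' u v ∈ QTP U' V' ∧ tensorElt U' V' u v ≠ 0 := by
  constructor
  · constructor
    · intro β
      refine ⟨((β : V →ₗ[ℝ] ℍ) v) • u, fun α => ?_⟩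
      have h1 : (α : U →ₗ[ℝ] ℍ) (((β : V →ₗ[ℝ] ℍ) v) • u)
          = ((β : V →ₗ[ℝ] ℍ) v) * (α : U →ₗ[ℝ] ℍ) u := α.2.1 _ u
      have h2 := hcomm α α.2 β β.2
      show (α : U →ₗ[ℝ] ℍ) u * (β : V →ₗ[ℝ] ℍ) v = _
      rw [iotaAH_apply, h1, ← h2]
    · intro α
      refine ⟨((α : U →ₗ[ℝ] ℍ) u) • v, fun β => ?_⟩
      have h1 : (β : V →ₗ[ℝ] ℍ) (((α : U →ₗ[ℝ] ℍ) u) • v)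
          = ((α : U →ₗ[ℝ] ℍ) u) * (β : V →ₗ[ℝ] ℍ) v := β.2.1 _ v
      show (α : U →ₗ[ℝ] ℍ) u * (β : V →ₗ[ℝ] ℍ) v = _
      rw [iotaAH_apply, h1]
  · intro h0
    obtain ⟨β, hβmem, hβv⟩ : ∃ β ∈ AHDual V', (β : V →ₗ[ℝ] ℍ) v ≠ 0 := by
      by_contra hc
      push_neg at hc
      exact hv (hV v hc)
    apply hu
    apply hU
    intro α hα
    have := congrFun (congrArg (fun B => fun (a : ↥(AHDual U')) (b : ↥(AHDual V')) => B a b)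
      h0) ⟨α, hα⟩
    have h := congrFun this ⟨β, hβmem⟩
    have h' : α u * β v = 0 := h
    exact (mul_eq_zero.mp h').resolve_right hβv

end
end
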